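/- Let p : Set (I × L) → Set (O × L) with L a complete lattice, and let k_p(ℓ) = ⨅{ j | ∃ x, j ∈ Labels(p(x)) ∧ ℓ ≤ j }. Suppose k : L → L is a closure operator such that every label appearing in any output of p is a fixed point of k (i.e., for all x and j ∈ Labels(p(x)), k(j) = j). Then for all ℓ, j ∈ L: k_p(ℓ) ≠ k_p(j) implies k(ℓ) ≠ k(j). -/
import Mathlib

theorem kp_canonical {I O L : Type*} [CompleteLattice L]
    (p : Set (I × L) → Set (O × L)) (k : L → L)
    (hext : ∀ ℓ : L, ℓ ≤ k ℓ)
    (hmono : ∀ ℓ j : L, ℓ ≤ j → k ℓ ≤ k j)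
    (hidem : ∀ ℓ : L, k (k ℓ) = k ℓ)
    (hfix : ∀ (x : Set (I × L)) (j : L), (∃ a, (a, j) ∈ p x) → k j = j)
    (ℓ j : L)
    (hne : sInf {i | (∃ x, ∃ a, (a, i) ∈ p x) ∧ ℓ ≤ i} ≠
           sInf {i | (∃ x, ∃ a, (a, i) ∈ p x) ∧ j ≤ i}) :
    k ℓ ≠ k j := by
  intro hkeq
  apply hne
  congr 1
  ext i
  constructor
  · rintro ⟨⟨x, hx⟩, hli⟩
    refine ⟨⟨x, hx⟩, ?_⟩
    calc j ≤ k j := hext j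
      _ = k ℓ := hkeq.symm
      _ ≤ k i := hmono _ _ hli
      _ = i := hfix x i hx
  · rintro ⟨⟨x, hx⟩, hji⟩
    refine ⟨⟨x, hx⟩, ?_⟩
    calc ℓ ≤ k ℓ := hext ℓ
      _ = k j := hkeq
      _ ≤ k i := hmono _ _ hji
      _ = i := hfix x i hx
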